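/- Let b, c, ν, w, ρ ∈ ℂ with Re(ρ) > 0, Re(c) > 0, Re(ν) > -1 and Re(w) > -1, let α, β > 0 be real and let z > 0 be real. Then G_ν^{(b,c)}(αz;ρ) · G_w^{(b,c)}(βz;ρ) = ((αz)^ν (βz)^w)/(2^{ν+w} Γ(c)² Γ(ν+1)² Γ(w+1)²) · ∫_0^∞ ∫_0^∞ t^{c+ν-1} u^{c+w-1} e^{-t-u-ρ/t-ρ/u} · ₀F₃(-; ν+1, (ν+1)/2, (ν+2)/2; -b α² z² t²/16) · ₀F₃(-; w+1, (w+1)/2, (w+2)/2; -b β² z² u²/16) dt du, the double integral being over real t, u ∈ (0,∞). -/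

import Mathlib

open Complex MeasureTheory Real Set Filter
set_option maxHeartbeats 1000000

/-- Extended Gamma function `Γ_ρ(x) = ∫_0^∞ t^(x-1) e^(-t-ρ/t) dt`. -/
noncomputable def extGamma (ρ x : ℂ) : ℂ :=
  ∫ t in Ioi (0:ℝ), (t:ℂ) ^ (x - 1) * Complex.exp (-(t:ℂ) - ρ / (t:ℂ))

/-- Generalized Pochhammer symbol `(c;ρ)_μ = Γ_ρ(c+μ)/Γ(c)`. -/
noncomputable def genPoch (c ρ μ : ℂ) : ℂ := extGamma ρ (c + μ) / Complex.Gamma c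

/-- Unified four parameter Bessel function `G_ν^{(b,c)}(z;ρ)` with complex order,
powers being principal complex powers. -/
noncomputable def unifiedG (b c ν ρ z : ℂ) : ℂ :=
  ∑' k : ℕ, (-b) ^ k * genPoch c ρ (2 * (k:ℂ) + ν) * (z / 2) ^ (2 * (k:ℂ) + ν) /
    ((k.factorial : ℂ) * Complex.Gamma (ν + (k:ℂ) + 1) * Complex.Gamma (ν + 2 * (k:ℂ) + 1))

/-- Unified four parameter Bessel function with integer order, powers being integer powers. -/
noncomputable def unifiedGInt (b c ρ : ℂ) (ν : ℤ) (z : ℂ) : ℂ :=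
  ∑' k : ℕ, (-b) ^ k * genPoch c ρ (2 * (k:ℂ) + (ν:ℂ)) * (z / 2) ^ (2 * (k:ℤ) + ν) /
    ((k.factorial : ℂ) * Complex.Gamma ((ν:ℂ) + (k:ℂ) + 1) * Complex.Gamma ((ν:ℂ) + 2 * (k:ℂ) + 1))

/-- Pochhammer symbol `(a)_k = Γ(a+k)/Γ(a)`. -/
noncomputable def poch (a : ℂ) (k : ℕ) : ℂ := Complex.Gamma (a + (k:ℂ)) / Complex.Gamma a

/-- Generalized hypergeometric function `₀F₃`. -/
noncomputable def hyp0F3 (a₁ a₂ a₃ w : ℂ) : ℂ :=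
  ∑' k : ℕ, w ^ k / (poch a₁ k * poch a₂ k * poch a₃ k * (k.factorial : ℂ))

/-- Generalized hypergeometric function `₂F₃`. -/
noncomputable def hyp2F3 (a₁ a₂ b₁ b₂ b₃ w : ℂ) : ℂ :=
  ∑' k : ℕ, poch a₁ k * poch a₂ k * w ^ k /
    (poch b₁ k * poch b₂ k * poch b₃ k * (k.factorial : ℂ))

/-- Bessel function of the first kind `J_μ(z)` for real `z > 0`. -/
noncomputable def besselJ (μ : ℂ) (z : ℝ) : ℂ :=
  ∑' k : ℕ, (-1) ^ k * ((z:ℂ) / 2) ^ (2 * (k:ℂ) + μ) /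
    ((k.factorial : ℂ) * Complex.Gamma (μ + (k:ℂ) + 1))

/-- Generalized four parameter spherical Bessel function
`g_ν^{(b,c)}(z;ρ) = √(π/(2z)) · G_{ν+1/2}^{(b,c-1/2)}(z;ρ)`. -/
noncomputable def sphG (b c ν ρ : ℂ) (z : ℝ) : ℂ :=
  (Real.sqrt (π / (2 * z)) : ℂ) * unifiedG b (c - 1/2) (ν + 1/2) ρ (z:ℂ)

/-- Generalized four parameter Bessel-Clifford function
`C_ν^{(b,λ)}(z;ρ) = z^{-ν/2} · G_ν^{(b,λ)}(2√z;ρ)` for real `z > 0`. -/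
noncomputable def cliffC (b lam ν ρ : ℂ) (z : ℝ) : ℂ :=
  (z:ℂ) ^ (-ν / 2) * unifiedG b lam ν ρ ((2 * Real.sqrt z : ℝ) : ℂ)

lemma myGamma_ne_zero {a : ℂ} (ha : 0 < a.re) : Complex.Gamma a ≠ 0 := by
  apply Complex.Gamma_ne_zero
  intro m h
  rw [h] at ha
  simp at ha
  have : (0:ℝ) ≤ m := Nat.cast_nonneg m
  linarith

lemma poch_ne_zero {a : ℂ} (ha : 0 < a.re) (k : ℕ) : poch a k ≠ 0 := by
  unfold poch
  apply div_ne_zero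
  · apply myGamma_ne_zero; simp; positivity
  · exact myGamma_ne_zero ha

lemma poch_zero {a : ℂ} (ha : 0 < a.re) : poch a 0 = 1 := by
  unfold poch
  simp [div_self (myGamma_ne_zero ha)]

lemma poch_succ {a : ℂ} (ha : 0 < a.re) (k : ℕ) : poch a (k+1) = poch a k * (a + k) := by
  unfold poch
  have h1 : a + ((k:ℂ)+1) = (a + k) + 1 := by ring
  have h2 : a + k ≠ 0 := by
    intro h
    have := congrArg Complex.re h
    simp at this
    have : (0:ℝ) ≤ k := Nat.cast_nonneg k
    linarith [congrArg Complex.re h, (by simp : (a + (k:ℂ)).re = a.re + k)]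
  push_cast
  rw [h1, Complex.Gamma_add_one _ h2]
  ring

lemma gamma_mul_poch {a : ℂ} (ha : 0 < a.re) (k : ℕ) :
    Complex.Gamma a * poch a k = Complex.Gamma (a + k) := by
  unfold poch
  field_simp [myGamma_ne_zero ha]

lemma poch_dup {a : ℂ} (ha : 0 < a.re) (k : ℕ) :
    poch (a/2) k * poch ((a+1)/2) k * 4^k = poch a (2*k) := by
  have h2 : 0 < (a/2).re := by simp [Complex.div_re]; exact ha
  have h3 : 0 < ((a+1)/2).re := by
    have : ((a+1)/2).re = (a.re + 1)/2 := by simp [Complex.div_re, Complex.add_re]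
    rw [this]; positivity
  induction k with
  | zero => simp [poch_zero ha, poch_zero h2, poch_zero h3]
  | succ n ih =>
    rw [poch_succ h2, poch_succ h3, show 2*(n+1) = 2*n+1+1 from by ring,
      poch_succ ha, poch_succ ha]
    push_cast
    rw [pow_succ]
    have : poch (a/2) n * (a/2 + n) * (poch ((a+1)/2) n * ((a+1)/2 + n)) * (4^n * 4)
        = (poch (a/2) n * poch ((a+1)/2) n * 4^n) * ((a + 2*n) * (a + 2*n + 1)) := by ring
    rw [this, ih]
    push_cast
    ring

lemma abs_add_nat_pos {a : ℂ} (ha : 0 < a.re) (k : ℕ) : (0:ℝ) < ‖a + (k:ℂ)‖ := by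
  have h1 : (a + (k:ℂ)).re ≤ ‖a + (k:ℂ)‖ := Complex.re_le_norm _
  have h2 : (a + (k:ℂ)).re = a.re + k := by simp
  have : (0:ℝ) ≤ k := Nat.cast_nonneg k
  nlinarith

lemma abs_add_nat_ge {a : ℂ} (k : ℕ) : a.re + k ≤ ‖a + (k:ℂ)‖ := by
  have h1 : (a + (k:ℂ)).re ≤ ‖a + (k:ℂ)‖ := Complex.re_le_norm _
  simpa using h1

lemma summable_aux (w ν : ℂ) (hν : -1 < ν.re) (s : ℝ) (hs : -1 < s) :
    Summable (fun k : ℕ => ‖w ^ k /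
      (poch (ν+1) k * poch ((ν+1)/2) k * poch ((ν+2)/2) k * (k.factorial : ℂ))‖ *
      Real.Gamma (s + 2*k + 1)) := by
  set a1 : ℂ := ν + 1 with ha1
  set a2 : ℂ := (ν+1)/2 with ha2
  set a3 : ℂ := (ν+2)/2 with ha3
  have hr1 : 0 < a1.re := by simp [ha1]; linarith
  have hr2 : 0 < a2.re := by
    rw [ha2]; simp [Complex.div_re, Complex.add_re]; linarith
  have hr3 : 0 < a3.re := by
    rw [ha3]; simp [Complex.div_re, Complex.add_re]; linarith
  set M : ℕ → ℝ := fun k => ‖w ^ k /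
      (poch a1 k * poch a2 k * poch a3 k * (k.factorial : ℂ))‖ *
      Real.Gamma (s + 2*k + 1) with hM
  set q : ℝ := ‖w‖ with hq
  set m : ℝ := min 1 (min a1.re (min a2.re a3.re)) with hm
  have hm0 : 0 < m := by
    rw [hm]; simp only [lt_min_iff]; exact ⟨one_pos, hr1, hr2, hr3⟩
  have hm1 : m ≤ 1 := min_le_left _ _
  have hmr1 : m ≤ a1.re := le_trans (min_le_right _ _) (min_le_left _ _)
  have hmr2 : m ≤ a2.re := le_trans (min_le_right _ _) (le_trans (min_le_right _ _) (min_le_left _ _))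
  have hmr3 : m ≤ a3.re := le_trans (min_le_right _ _) (le_trans (min_le_right _ _) (min_le_right _ _))
  set K : ℝ := q * (|s| + 2)^2 / m^3 with hK
  have hK0 : 0 ≤ K := by positivity
  -- recurrence
  have hMpos : ∀ k, 0 ≤ M k := by
    intro k
    apply mul_nonneg (norm_nonneg _)
    exact le_of_lt (Real.Gamma_pos_of_pos (by push_cast; nlinarith [Nat.cast_nonneg (α := ℝ) k]))
  have hrec : ∀ k : ℕ, M (k+1) = M k *
      (q * ((s + 2*k + 1) * (s + 2*k + 2)) /
        (‖a1 + k‖ * ‖a2 + k‖ * ‖a3 + k‖ * (k+1))) := by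
    intro k
    have hg : Real.Gamma (s + 2*((k+1:ℕ):ℝ) + 1) =
        (s + 2*k + 1) * (s + 2*k + 2) * Real.Gamma (s + 2*k + 1) := by
      have h1 : (0:ℝ) < s + 2*k + 1 := by nlinarith [Nat.cast_nonneg (α := ℝ) k]
      have e1 : s + 2*(k:ℝ) + 2 = (s + 2*k + 1) + 1 := by ring
      have e2 : s + 2*((k:ℝ)+1) + 1 = (s + 2*k + 2) + 1 := by ring
      push_cast
      rw [e2, Real.Gamma_add_one (by nlinarith), e1, Real.Gamma_add_one (ne_of_gt h1)]
      ring
    have hC : w ^ (k+1) / (poch a1 (k+1) * poch a2 (k+1) * poch a3 (k+1) * ((k+1).factorial : ℂ))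
        = (w ^ k / (poch a1 k * poch a2 k * poch a3 k * (k.factorial : ℂ))) *
          (w / ((a1 + k) * (a2 + k) * (a3 + k) * ((k:ℂ)+1))) := by
      rw [poch_succ hr1, poch_succ hr2, poch_succ hr3, Nat.factorial_succ]
      push_cast
      field_simp
      ring
    rw [hM]
    simp only
    rw [hC, hg, norm_mul]
    have hnk : ‖(k:ℂ)+1‖ = (k:ℝ)+1 := by
      rw [show (k:ℂ)+1 = ((k+1:ℕ):ℂ) by push_cast; ring, Complex.norm_natCast]
      push_cast; ring
    have h2' : ‖w / ((a1 + (k:ℂ)) * (a2 + (k:ℂ)) * (a3 + (k:ℂ)) * ((k:ℂ) + 1))‖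
        = q / (‖a1 + (k:ℂ)‖ * ‖a2 + (k:ℂ)‖ * ‖a3 + (k:ℂ)‖ * ((k:ℝ)+1)) := by
      rw [norm_div, norm_mul, norm_mul, norm_mul, hnk]
    rw [h2']
    push_cast
    ring
  -- eventual ratio bound
  have hev : ∀ᶠ k : ℕ in atTop, ‖M (k+1)‖ ≤ (1/2 : ℝ) * ‖M k‖ := by
    filter_upwards [eventually_ge_atTop (⌈2*K⌉₊ + 1)] with k hk
    have hk1 : 2*K ≤ (k:ℝ) + 1 := by
      have := Nat.le_ceil (2*K)
      have hk' : (⌈2*K⌉₊ : ℝ) ≤ k := by exact_mod_cast le_trans (Nat.le_succ _) hk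
      linarith
    rw [Real.norm_of_nonneg (hMpos _), Real.norm_of_nonneg (hMpos _), hrec k]
    rw [mul_comm (1/2 : ℝ) (M k)]
    apply mul_le_mul_of_nonneg_left _ (hMpos k)
    -- factor ≤ 1/2
    have hkpos : (0:ℝ) < (k:ℝ) + 1 := by positivity
    have hN1 : m * ((k:ℝ)+1) ≤ ‖a1 + k‖ := by
      have := abs_add_nat_ge (a := a1) k
      nlinarith [Nat.cast_nonneg (α := ℝ) k]
    have hN2 : m * ((k:ℝ)+1) ≤ ‖a2 + k‖ := by
      have := abs_add_nat_ge (a := a2) k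
      nlinarith [Nat.cast_nonneg (α := ℝ) k]
    have hN3 : m * ((k:ℝ)+1) ≤ ‖a3 + k‖ := by
      have := abs_add_nat_ge (a := a3) k
      nlinarith [Nat.cast_nonneg (α := ℝ) k]
    have hden : m^3 * ((k:ℝ)+1)^4 ≤ ‖a1 + k‖ * ‖a2 + k‖ * ‖a3 + k‖ * ((k:ℝ)+1) := by
      have h := mul_le_mul (mul_le_mul (mul_le_mul hN1 hN2 (by positivity)
        (norm_nonneg _)) hN3 (by positivity) (by positivity))
        (le_refl ((k:ℝ)+1)) (le_of_lt hkpos) (by positivity)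
      calc m^3 * ((k:ℝ)+1)^4 = (m * ((k:ℝ)+1)) * (m * ((k:ℝ)+1)) * (m * ((k:ℝ)+1)) * ((k:ℝ)+1) := by ring
      _ ≤ _ := h
    have hnum : q * ((s + 2*k + 1) * (s + 2*k + 2)) ≤ q * ((|s|+2)*((k:ℝ)+1))^2 := by
      have h1 : s + 2*(k:ℝ) + 1 ≤ (|s|+2)*((k:ℝ)+1) := by
        have := abs_nonneg s
        nlinarith [le_abs_self s, Nat.cast_nonneg (α := ℝ) k]
      have h2 : s + 2*(k:ℝ) + 2 ≤ (|s|+2)*((k:ℝ)+1) := by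
        nlinarith [le_abs_self s, abs_nonneg s, Nat.cast_nonneg (α := ℝ) k]
      have h0 : (0:ℝ) ≤ s + 2*(k:ℝ) + 1 := by nlinarith [Nat.cast_nonneg (α := ℝ) k]
      have h0' : (0:ℝ) ≤ s + 2*(k:ℝ) + 2 := by nlinarith [Nat.cast_nonneg (α := ℝ) k]
      have : (s + 2*(k:ℝ) + 1) * (s + 2*(k:ℝ) + 2) ≤ ((|s|+2)*((k:ℝ)+1))^2 := by
        nlinarith
      exact mul_le_mul_of_nonneg_left this (norm_nonneg w)
    have hdenpos : (0:ℝ) < m^3 * ((k:ℝ)+1)^4 := by positivity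
    calc q * ((s + 2*(k:ℝ) + 1) * (s + 2*(k:ℝ) + 2)) /
          (‖a1 + k‖ * ‖a2 + k‖ * ‖a3 + k‖ * ((k:ℝ)+1))
        ≤ (q * ((|s|+2)*((k:ℝ)+1))^2) / (m^3 * ((k:ℝ)+1)^4) := by
          apply div_le_div₀ (by positivity) hnum hdenpos hden
      _ = K / ((k:ℝ)+1)^2 := by rw [hK]; field_simp
      _ ≤ 1/2 := by
          rw [div_le_iff₀ (by positivity)]
          nlinarith [Nat.cast_nonneg (α := ℝ) k]
  exact summable_of_ratio_norm_eventually_le (by norm_num) hev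

lemma lintegral_gamma {σ : ℝ} (hσ : 0 < σ) :
    ∫⁻ t in Ioi (0:ℝ), ENNReal.ofReal (Real.exp (-t) * t ^ (σ-1)) = ENNReal.ofReal (Real.Gamma σ) := by
  rw [Real.Gamma_eq_integral hσ]
  rw [ofReal_integral_eq_lintegral_ofReal (Real.GammaIntegral_convergent hσ)]
  filter_upwards [ae_restrict_mem measurableSet_Ioi] with t ht
  have : (0:ℝ) < t := ht
  positivity

lemma key (b c ν ρ : ℂ) (hρ : 0 < ρ.re) (hc : 0 < c.re) (hν : -1 < ν.re) (x : ℝ) (hx : 0 < x) :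
    unifiedG b c ν ρ ((x:ℝ):ℂ) =
      (x:ℂ) ^ ν / ((2:ℂ) ^ ν * Complex.Gamma c * Complex.Gamma (ν + 1) ^ 2) *
        ∫ t in Ioi (0:ℝ), (t:ℂ) ^ (c + ν - 1) * Complex.exp (-(t:ℂ) - ρ / (t:ℂ)) *
          hyp0F3 (ν + 1) ((ν + 1) / 2) ((ν + 2) / 2) (-b * (x:ℂ) ^ 2 * (t:ℂ) ^ 2 / 16) := by
  have hν1 : 0 < (ν+1).re := by simp [Complex.add_re]; linarith
  have hν2 : 0 < ((ν+1)/2).re := by simp [Complex.div_re, Complex.add_re]; linarith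
  have hν3 : 0 < ((ν+2)/2).re := by simp [Complex.div_re, Complex.add_re]; linarith
  set w0 : ℂ := -b * (x:ℂ)^2 / 16 with hw0
  set D : ℕ → ℂ := fun k => poch (ν+1) k * poch ((ν+1)/2) k * poch ((ν+2)/2) k *
    (k.factorial : ℂ) with hD
  set g : ℕ → ℝ → ℂ := fun k t => (w0^k / D k) *
    ((t:ℂ) ^ (c + (2*(k:ℂ)+ν) - 1) * Complex.exp (-(t:ℂ) - ρ/(t:ℂ))) with hg
  set s : ℝ := (c+ν).re with hs'
  have hs : -1 < s := by rw [hs']; simp [Complex.add_re]; linarith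
  have hDne : ∀ k, D k ≠ 0 := by
    intro k
    refine mul_ne_zero (mul_ne_zero (mul_ne_zero ?_ ?_) ?_) ?_
    exacts [poch_ne_zero hν1 k, poch_ne_zero hν2 k, poch_ne_zero hν3 k,
      Nat.cast_ne_zero.2 k.factorial_ne_zero]
  -- Step A: pointwise series expansion of the integrand
  have hA : ∀ t ∈ Ioi (0:ℝ),
      (t:ℂ) ^ (c + ν - 1) * Complex.exp (-(t:ℂ) - ρ / (t:ℂ)) *
        hyp0F3 (ν + 1) ((ν + 1) / 2) ((ν + 2) / 2) (-b * (x:ℂ) ^ 2 * (t:ℂ) ^ 2 / 16)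
      = ∑' k, g k t := by
    intro t ht
    have ht0 : (t:ℂ) ≠ 0 := Complex.ofReal_ne_zero.2 (ne_of_gt ht)
    have harg : -b * (x:ℂ)^2 * (t:ℂ)^2 / 16 = w0 * (t:ℂ)^2 := by rw [hw0]; ring
    rw [harg]
    unfold hyp0F3
    rw [mul_comm, ← tsum_mul_right]
    apply tsum_congr
    intro k
    have hpow : (t:ℂ) ^ (c + (2*(k:ℂ)+ν) - 1) = (t:ℂ) ^ (c + ν - 1) * (t:ℂ)^(2*k) := by
      rw [← Complex.cpow_natCast (t:ℂ) (2*k), ← Complex.cpow_add _ _ ht0]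
      congr 1
      push_cast
      ring
    rw [hg]
    simp only
    rw [hpow, mul_pow, ← pow_mul]
    field_simp
    ring
  -- Step B: measurability
  have hmeas : ∀ k, AEStronglyMeasurable (g k) (volume.restrict (Ioi 0)) := by
    intro k
    apply ContinuousOn.aestronglyMeasurable _ measurableSet_Ioi
    apply ContinuousOn.mul continuousOn_const
    apply ContinuousOn.mul
    · intro t ht
      exact ((continuousAt_cpow_const (Or.inl (by exact_mod_cast ht))).comp
        Complex.continuous_ofReal.continuousAt).continuousWithinAt
    · apply Complex.continuous_exp.comp_continuousOn
      apply ContinuousOn.sub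
      · exact (Complex.continuous_ofReal.neg).continuousOn
      · exact continuousOn_const.div Complex.continuous_ofReal.continuousOn
          (fun t ht => Complex.ofReal_ne_zero.2 (ne_of_gt ht))
  -- Step C: pointwise norm bound
  have hnorm : ∀ (k : ℕ), ∀ t ∈ Ioi (0:ℝ), ‖g k t‖ ≤
      (‖w0^k / D k‖ / ρ.re) * (Real.exp (-t) * t ^ (s + 2*k)) := by
    intro k t ht
    have ht' : (0:ℝ) < t := ht
    have hre1 : (c + (2*(k:ℂ)+ν) - 1).re = s + 2*k - 1 := by
      rw [hs']; simp [Complex.add_re, Complex.sub_re]; ring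
    have hre2 : (-(t:ℂ) - ρ/(t:ℂ)).re = -t - ρ.re/t := by
      rw [div_eq_mul_inv, ← Complex.ofReal_inv]
      simp [Complex.sub_re, Complex.mul_re]
      ring
    have hexp : Real.exp (-t - ρ.re/t) ≤ Real.exp (-t) * (t / ρ.re) := by
      rw [sub_eq_add_neg, Real.exp_add]
      apply mul_le_mul_of_nonneg_left _ (le_of_lt (Real.exp_pos _))
      have hu : (0:ℝ) < ρ.re / t := by positivity
      have h1 : ρ.re / t ≤ Real.exp (ρ.re / t) := by
        have := Real.add_one_le_exp (ρ.re / t); linarith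
      have h2 : (Real.exp (ρ.re / t))⁻¹ ≤ (ρ.re / t)⁻¹ :=
        inv_anti₀ hu h1
      rw [Real.exp_neg]
      calc (Real.exp (ρ.re / t))⁻¹ ≤ (ρ.re / t)⁻¹ := h2
        _ = t / ρ.re := by rw [inv_div]
    rw [hg]
    simp only
    rw [norm_mul, norm_mul]
    have e1 : ‖(t:ℂ) ^ (c + (2*(k:ℂ)+ν) - 1)‖ = t ^ (s + 2*(k:ℝ) - 1) := by
      rw [Complex.norm_cpow_eq_rpow_re_of_pos ht', hre1]
    have e2 : ‖Complex.exp (-(t:ℂ) - ρ/(t:ℂ))‖ = Real.exp (-t - ρ.re/t) := by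
      rw [Complex.norm_exp, hre2]
    rw [e1, e2]
    calc ‖w0^k / D k‖ * (t ^ (s + 2*(k:ℝ) - 1) * Real.exp (-t - ρ.re/t))
        ≤ ‖w0^k / D k‖ * (t ^ (s + 2*(k:ℝ) - 1) * (Real.exp (-t) * (t / ρ.re))) := by
          apply mul_le_mul_of_nonneg_left _ (norm_nonneg _)
          exact mul_le_mul_of_nonneg_left hexp (Real.rpow_nonneg ht'.le _)
      _ = (‖w0^k / D k‖ / ρ.re) * (Real.exp (-t) * (t ^ (s + 2*(k:ℝ) - 1) * t)) := by
          field_simp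
      _ = (‖w0^k / D k‖ / ρ.re) * (Real.exp (-t) * t ^ (s + 2*(k:ℝ))) := by
          have e3 : t ^ (s + 2*(k:ℝ) - 1) * t = t ^ (s + 2*(k:ℝ)) := by
            rw [← Real.rpow_add_one (ne_of_gt ht')]
            ring_nf
          rw [e3]
  -- Step D: lintegral bound
  have hlint : ∀ k : ℕ, ∫⁻ t in Ioi (0:ℝ), ‖g k t‖₊ ≤
      ENNReal.ofReal ((‖w0^k / D k‖ / ρ.re) * Real.Gamma (s + 2*k + 1)) := by
    intro k
    have hσ : (0:ℝ) < s + 2*k + 1 := by nlinarith [Nat.cast_nonneg (α := ℝ) k]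
    have hcnn : (0:ℝ) ≤ ‖w0^k / D k‖ / ρ.re := by positivity
    have hgam := lintegral_gamma (σ := s + 2*(k:ℝ) + 1) hσ
    rw [show s + 2*(k:ℝ) + 1 - 1 = s + 2*(k:ℝ) from by ring] at hgam
    calc ∫⁻ t in Ioi (0:ℝ), (‖g k t‖₊ : ENNReal)
        ≤ ∫⁻ t in Ioi (0:ℝ), ENNReal.ofReal (‖w0^k / D k‖ / ρ.re) *
            ENNReal.ofReal (Real.exp (-t) * t ^ (s + 2*(k:ℝ))) := by
          apply lintegral_mono_ae
          filter_upwards [ae_restrict_mem measurableSet_Ioi] with t ht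
          rw [← enorm_eq_nnnorm, ← ofReal_norm, ← ENNReal.ofReal_mul hcnn]
          exact ENNReal.ofReal_le_ofReal (hnorm k t ht)
      _ = ENNReal.ofReal (‖w0^k / D k‖ / ρ.re) *
            ∫⁻ t in Ioi (0:ℝ), ENNReal.ofReal (Real.exp (-t) * t ^ (s + 2*(k:ℝ))) :=
          lintegral_const_mul' _ _ ENNReal.ofReal_ne_top
      _ = ENNReal.ofReal ((‖w0^k / D k‖ / ρ.re) * Real.Gamma (s + 2*k + 1)) := by
          rw [hgam, ← ENNReal.ofReal_mul hcnn]
  -- Step E: finiteness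
  have hsum : Summable (fun k : ℕ => (‖w0^k / D k‖ / ρ.re) * Real.Gamma (s + 2*k + 1)) := by
    have h := (summable_aux w0 ν hν s hs).mul_left (1/ρ.re)
    apply h.congr
    intro k
    rw [hD]
    simp only
    ring
  have hfin : ∑' k : ℕ, ∫⁻ t in Ioi (0:ℝ), ‖g k t‖₊ ≠ ⊤ := by
    apply ne_top_of_le_ne_top _ (ENNReal.tsum_le_tsum hlint)
    rw [← ENNReal.ofReal_tsum_of_nonneg _ hsum]
    · exact ENNReal.ofReal_ne_top
    · intro k
      have hσ : (0:ℝ) < s + 2*k + 1 := by nlinarith [Nat.cast_nonneg (α := ℝ) k]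
      exact mul_nonneg (by positivity) (Real.Gamma_pos_of_pos hσ).le
  -- Step F: swap sum and integral
  have hswap : ∫ t in Ioi (0:ℝ), ∑' k, g k t = ∑' k, ∫ t in Ioi (0:ℝ), g k t :=
    integral_tsum hmeas hfin
  -- Step G: termwise identity
  have hterm : ∀ k : ℕ,
      (-b)^k * genPoch c ρ (2*(k:ℂ)+ν) * (((x:ℝ):ℂ)/2)^(2*(k:ℂ)+ν) /
        ((k.factorial:ℂ) * Complex.Gamma (ν+(k:ℂ)+1) * Complex.Gamma (ν+2*(k:ℂ)+1))
      = ((x:ℂ)^ν / ((2:ℂ)^ν * Complex.Gamma c * Complex.Gamma (ν+1)^2)) *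
        ∫ t in Ioi (0:ℝ), g k t := by
    intro k
    have hint : ∫ t in Ioi (0:ℝ), g k t = (w0^k / D k) * extGamma ρ (c + (2*(k:ℂ)+ν)) := by
      rw [hg]
      simp only
      rw [MeasureTheory.integral_const_mul]
      rfl
    rw [hint]
    have h2ν : (2:ℂ)^ν ≠ 0 := by
      rw [Ne, Complex.cpow_eq_zero_iff]
      push_neg
      intro h
      norm_num at h
    have h4k : (4:ℂ)^k ≠ 0 := pow_ne_zero _ (by norm_num)
    have hbase : (((x/2:ℝ)):ℂ) ≠ 0 := Complex.ofReal_ne_zero.2 (by positivity)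
    have hA' : (((x/2:ℝ)):ℂ)^(2*k) = (x:ℂ)^(2*k) / 4^k := by
      push_cast
      rw [div_pow, pow_mul, pow_mul]
      norm_num
    have hB : (((x/2:ℝ)):ℂ)^ν = (x:ℂ)^ν / (2:ℂ)^ν := by
      rw [show (x/2:ℝ) = x * (2⁻¹:ℝ) from by ring, Complex.ofReal_mul,
        Complex.mul_cpow_ofReal_nonneg hx.le (by norm_num)]
      rw [Complex.ofReal_inv]
      rw [show ((2:ℝ):ℂ) = (2:ℂ) from by norm_num]
      rw [Complex.inv_cpow _ _ (by
        rw [Ne, Complex.arg_eq_pi_iff]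
        push_neg
        intro h
        norm_num at h)]
      rw [div_eq_mul_inv]
    have hpow : (((x:ℝ):ℂ)/2)^(2*(k:ℂ)+ν) = (x:ℂ)^ν * (x:ℂ)^(2*k) / ((2:ℂ)^ν * 4^k) := by
      rw [show ((x:ℝ):ℂ)/2 = (((x/2:ℝ)):ℂ) from by push_cast; ring]
      rw [Complex.cpow_add _ _ hbase]
      rw [show (2*(k:ℂ)) = ((2*k:ℕ):ℂ) from by push_cast; ring, Complex.cpow_natCast]
      rw [hA', hB]
      field_simp
    have hG1 : Complex.Gamma (ν + (k:ℂ) + 1) = Complex.Gamma (ν+1) * poch (ν+1) k := by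
      rw [gamma_mul_poch hν1]
      congr 1
      push_cast
      ring
    have hG2 : Complex.Gamma (ν + 2*(k:ℂ) + 1) = Complex.Gamma (ν+1) * poch (ν+1) (2*k) := by
      rw [gamma_mul_poch hν1]
      congr 1
      push_cast
      ring
    have hdup : poch ((ν+1)/2) k * poch ((ν+2)/2) k * 4^k = poch (ν+1) (2*k) := by
      have h := poch_dup hν1 k
      rw [show ((ν+1)+1)/2 = (ν+2)/2 from by ring] at h
      exact h
    have hw0k : w0^k = (-b)^k * (x:ℂ)^(2*k) / (16:ℂ)^k := by
      rw [hw0, div_pow, mul_pow, pow_mul]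
    have h16 : (16:ℂ)^k = 4^k * 4^k := by rw [← mul_pow]; norm_num
    unfold genPoch
    rw [hpow, hG1, hG2, hw0k, h16, hD]
    simp only
    rw [← hdup]
    field_simp [h2ν, h4k, myGamma_ne_zero hc, myGamma_ne_zero hν1, poch_ne_zero hν1 k,
      poch_ne_zero hν2 k, poch_ne_zero hν3 k, Nat.cast_ne_zero.2 k.factorial_ne_zero]
  -- final assembly
  unfold unifiedG
  rw [tsum_congr hterm, tsum_mul_left, ← hswap]
  congr 1
  exact setIntegral_congr_fun measurableSet_Ioi (fun t ht => (hA t ht).symm)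

theorem stmt14 (b c ν w ρ : ℂ) (hρ : 0 < ρ.re) (hc : 0 < c.re) (hν : -1 < ν.re)
    (hw : -1 < w.re) (α β z : ℝ) (hα : 0 < α) (hβ : 0 < β) (hz : 0 < z) :
    unifiedG b c ν ρ ((α * z : ℝ):ℂ) * unifiedG b c w ρ ((β * z : ℝ):ℂ) =
      ((α * z : ℝ):ℂ) ^ ν * ((β * z : ℝ):ℂ) ^ w /
          ((2:ℂ) ^ (ν + w) * Complex.Gamma c ^ 2 * Complex.Gamma (ν + 1) ^ 2 *
            Complex.Gamma (w + 1) ^ 2) *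
        ∫ t in Ioi (0:ℝ), ∫ u in Ioi (0:ℝ),
          (t:ℂ) ^ (c + ν - 1) * (u:ℂ) ^ (c + w - 1) *
            Complex.exp (-(t:ℂ) - (u:ℂ) - ρ / (t:ℂ) - ρ / (u:ℂ)) *
            hyp0F3 (ν + 1) ((ν + 1) / 2) ((ν + 2) / 2)
              (-b * (α:ℂ) ^ 2 * (z:ℂ) ^ 2 * (t:ℂ) ^ 2 / 16) *
            hyp0F3 (w + 1) ((w + 1) / 2) ((w + 2) / 2)
              (-b * (β:ℂ) ^ 2 * (z:ℂ) ^ 2 * (u:ℂ) ^ 2 / 16) := by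
  have hx1 : (0:ℝ) < α * z := by positivity
  have hx2 : (0:ℝ) < β * z := by positivity
  rw [key b c ν ρ hρ hc hν (α*z) hx1, key b c w ρ hρ hc hw (β*z) hx2]
  have e1 : ∀ t:ℝ, -b * ((α*z:ℝ):ℂ)^2 * (t:ℂ)^2/16 = -b * (α:ℂ)^2*(z:ℂ)^2*(t:ℂ)^2/16 :=
    fun t => by push_cast; ring
  have e2 : ∀ u:ℝ, -b * ((β*z:ℝ):ℂ)^2 * (u:ℂ)^2/16 = -b * (β:ℂ)^2*(z:ℂ)^2*(u:ℂ)^2/16 :=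
    fun u => by push_cast; ring
  simp only [e1, e2]
  set f : ℝ → ℂ := fun t => (t:ℂ) ^ (c + ν - 1) * Complex.exp (-(t:ℂ) - ρ / (t:ℂ)) *
    hyp0F3 (ν + 1) ((ν + 1) / 2) ((ν + 2) / 2) (-b * (α:ℂ)^2*(z:ℂ)^2*(t:ℂ)^2/16) with hf
  set g : ℝ → ℂ := fun u => (u:ℂ) ^ (c + w - 1) * Complex.exp (-(u:ℂ) - ρ / (u:ℂ)) *
    hyp0F3 (w + 1) ((w + 1) / 2) ((w + 2) / 2) (-b * (β:ℂ)^2*(z:ℂ)^2*(u:ℂ)^2/16) with hg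
  have hfact : ∀ t u : ℝ,
      (t:ℂ) ^ (c + ν - 1) * (u:ℂ) ^ (c + w - 1) *
        Complex.exp (-(t:ℂ) - (u:ℂ) - ρ / (t:ℂ) - ρ / (u:ℂ)) *
        hyp0F3 (ν + 1) ((ν + 1) / 2) ((ν + 2) / 2)
          (-b * (α:ℂ) ^ 2 * (z:ℂ) ^ 2 * (t:ℂ) ^ 2 / 16) *
        hyp0F3 (w + 1) ((w + 1) / 2) ((w + 2) / 2)
          (-b * (β:ℂ) ^ 2 * (z:ℂ) ^ 2 * (u:ℂ) ^ 2 / 16) = f t * g u := by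
    intro t u
    rw [hf, hg]
    simp only
    rw [show (-(t:ℂ) - (u:ℂ) - ρ/(t:ℂ) - ρ/(u:ℂ))
        = (-(t:ℂ) - ρ/(t:ℂ)) + (-(u:ℂ) - ρ/(u:ℂ)) from by ring, Complex.exp_add]
    ring
  have hdouble : (∫ t in Ioi (0:ℝ), ∫ u in Ioi (0:ℝ),
      (t:ℂ) ^ (c + ν - 1) * (u:ℂ) ^ (c + w - 1) *
        Complex.exp (-(t:ℂ) - (u:ℂ) - ρ / (t:ℂ) - ρ / (u:ℂ)) *
        hyp0F3 (ν + 1) ((ν + 1) / 2) ((ν + 2) / 2)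
          (-b * (α:ℂ) ^ 2 * (z:ℂ) ^ 2 * (t:ℂ) ^ 2 / 16) *
        hyp0F3 (w + 1) ((w + 1) / 2) ((w + 2) / 2)
          (-b * (β:ℂ) ^ 2 * (z:ℂ) ^ 2 * (u:ℂ) ^ 2 / 16))
      = (∫ t in Ioi (0:ℝ), f t) * ∫ u in Ioi (0:ℝ), g u := by
    have h1 : ∀ t : ℝ, (∫ u in Ioi (0:ℝ),
        (t:ℂ) ^ (c + ν - 1) * (u:ℂ) ^ (c + w - 1) *
          Complex.exp (-(t:ℂ) - (u:ℂ) - ρ / (t:ℂ) - ρ / (u:ℂ)) *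
          hyp0F3 (ν + 1) ((ν + 1) / 2) ((ν + 2) / 2)
            (-b * (α:ℂ) ^ 2 * (z:ℂ) ^ 2 * (t:ℂ) ^ 2 / 16) *
          hyp0F3 (w + 1) ((w + 1) / 2) ((w + 2) / 2)
            (-b * (β:ℂ) ^ 2 * (z:ℂ) ^ 2 * (u:ℂ) ^ 2 / 16))
        = f t * ∫ u in Ioi (0:ℝ), g u := by
      intro t
      rw [← MeasureTheory.integral_const_mul]
      congr 1
      funext u
      exact hfact t u
    simp only [h1]
    rw [MeasureTheory.integral_mul_const]
  rw [hdouble]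
  have h2 : (2:ℂ) ^ (ν + w) = (2:ℂ)^ν * (2:ℂ)^w :=
    Complex.cpow_add _ _ (by norm_num)
  rw [h2]
  ring
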